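/- Let L ∈ ℝ^{m×n} have rank r and let L̃ = L + E satisfy ‖E‖₂ ≤ (1/2)σ_min(L), where σ_min denotes the smallest nonzero singular value. Let L̃ = W̃ Σ̃ Ṽᵀ be a compact SVD of L̃ restricted to its top r singular values (L̃ having rank ≥ r). Let J ⊆ [n] with |J| = r, set C = L(:,J) and C̃ = W̃ Σ̃ (Ṽ(J,:))ᵀ, and assume (i) ‖C − C̃‖₂ ≤ (1/8)√(|J|/(rn)) σ_min(L), and (ii) ‖(Ṽ(J,:))†‖₂ ≤ √(rn/|J|) and both C and C̃ have rank r. Then ‖(V(J,:))†‖₂ ≤ 4 κ(L) √(rn/|J|), where V is the matrix of right singular vectors of L. -/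

import Mathlib

open Matrix BigOperators MeasureTheory

noncomputable def specNorm {m n : ℕ} (A : Matrix (Fin m) (Fin n) ℝ) : ℝ :=
  ‖LinearMap.toContinuousLinearMap (Matrix.toEuclideanLin A)‖

def IsMPInv {m n : ℕ} (A : Matrix (Fin m) (Fin n) ℝ) (B : Matrix (Fin n) (Fin m) ℝ) : Prop :=
  A * B * A = A ∧ B * A * B = B ∧ (A * B)ᵀ = A * B ∧ (B * A)ᵀ = B * A

noncomputable def rowNorm {m n : ℕ} (A : Matrix (Fin m) (Fin n) ℝ) (i : Fin m) : ℝ :=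
  Real.sqrt (∑ j, (A i j) ^ 2)

noncomputable def entryMax {m n : ℕ} (A : Matrix (Fin m) (Fin n) ℝ) : ℝ :=
  ⨆ i, ⨆ j, |A i j|

open RealInnerProductSpace
open scoped Matrix.Norms.L2Operator

namespace SpecAux

variable {m n p q : ℕ}

lemma specNorm_eq_norm (A : Matrix (Fin m) (Fin n) ℝ) : specNorm A = ‖A‖ := rfl

lemma specNorm_transpose (A : Matrix (Fin m) (Fin n) ℝ) : specNorm Aᵀ = specNorm A := by
  rw [specNorm_eq_norm, specNorm_eq_norm, ← Matrix.conjTranspose_eq_transpose_of_trivial,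
    Matrix.l2_opNorm_conjTranspose]

lemma specNorm_mul_le (A : Matrix (Fin m) (Fin n) ℝ) (B : Matrix (Fin n) (Fin p) ℝ) :
    specNorm (A * B) ≤ specNorm A * specNorm B := by
  simpa only [specNorm_eq_norm] using Matrix.l2_opNorm_mul A B

lemma specNorm_nonneg (A : Matrix (Fin m) (Fin n) ℝ) : 0 ≤ specNorm A := norm_nonneg _

lemma specNorm_le_add_sub (A B : Matrix (Fin m) (Fin n) ℝ) :
    specNorm A ≤ specNorm B + specNorm (A - B) := by
  simp only [specNorm_eq_norm]
  calc ‖A‖ = ‖B + (A - B)‖ := by rw [show B + (A - B) = A from by abel]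
  _ ≤ ‖B‖ + ‖A - B‖ := norm_add_le _ _

lemma specNorm_one (hn : 0 < n) : specNorm (1 : Matrix (Fin n) (Fin n) ℝ) = 1 := by
  haveI : Nonempty (Fin n) := ⟨⟨0, hn⟩⟩
  rw [specNorm_eq_norm, Matrix.cstar_norm_def, _root_.map_one]
  exact norm_one

lemma specNorm_orth {W : Matrix (Fin m) (Fin n) ℝ} (hn : 0 < n) (hW : Wᵀ * W = 1) :
    specNorm W = 1 := by
  have h1 : specNorm W * specNorm W = 1 := by
    have := Matrix.l2_opNorm_conjTranspose_mul_self W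
    rw [Matrix.conjTranspose_eq_transpose_of_trivial, hW] at this
    rw [specNorm_eq_norm, ← this, ← specNorm_eq_norm (1 : Matrix (Fin n) (Fin n) ℝ),
      specNorm_one hn]
  nlinarith [specNorm_nonneg W]

lemma specNorm_orth_mul {W : Matrix (Fin m) (Fin n) ℝ} (hn : 0 < n) (hW : Wᵀ * W = 1)
    (A : Matrix (Fin n) (Fin p) ℝ) : specNorm (W * A) = specNorm A := by
  refine le_antisymm ?_ ?_
  · calc specNorm (W * A) ≤ specNorm W * specNorm A := specNorm_mul_le _ _
    _ = specNorm A := by rw [specNorm_orth hn hW, one_mul]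
  · calc specNorm A = specNorm ((Wᵀ * W) * A) := by rw [hW, Matrix.one_mul]
    _ = specNorm (Wᵀ * (W * A)) := by rw [Matrix.mul_assoc]
    _ ≤ specNorm Wᵀ * specNorm (W * A) := specNorm_mul_le _ _
    _ = specNorm (W * A) := by rw [specNorm_transpose, specNorm_orth hn hW, one_mul]

noncomputable def ev {n : ℕ} (x : Fin n → ℝ) : EuclideanSpace ℝ (Fin n) :=
  (WithLp.equiv 2 (Fin n → ℝ)).symm x

lemma toEuclideanLin_ev (A : Matrix (Fin m) (Fin n) ℝ) (x : Fin n → ℝ) :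
    Matrix.toEuclideanLin A (ev x) = ev (A *ᵥ x) :=
  Matrix.toEuclideanLin_apply_piLp_toLp A x

lemma ev_add (x y : Fin n → ℝ) : ev (x + y) = ev x + ev y := rfl

lemma ev_smul (a : ℝ) (x : Fin n → ℝ) : ev (a • x) = a • ev x := rfl

lemma inner_ev (x y : Fin n → ℝ) : ⟪ev x, ev y⟫ = x ⬝ᵥ y := by
  simp [ev, PiLp.inner_apply, dotProduct, RCLike.inner_apply, mul_comm]

lemma norm_ev_sq (x : Fin n → ℝ) : ‖ev x‖ ^ 2 = x ⬝ᵥ x := by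
  rw [← inner_ev]; exact (real_inner_self_eq_norm_sq _).symm

lemma mulVec_dot (A : Matrix (Fin m) (Fin n) ℝ) (x : Fin n → ℝ) (y : Fin m → ℝ) :
    (A *ᵥ x) ⬝ᵥ y = x ⬝ᵥ (Aᵀ *ᵥ y) := by
  rw [Matrix.dotProduct_mulVec, Matrix.vecMul_transpose, dotProduct_comm]

lemma norm_ev_mulVec_le (A : Matrix (Fin m) (Fin n) ℝ) (x : Fin n → ℝ) :
    ‖ev (A *ᵥ x)‖ ≤ specNorm A * ‖ev x‖ :=
  Matrix.l2_opNorm_mulVec A (ev x)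

lemma le_of_sq_le_sq {a b : ℝ} (hb : 0 ≤ b) (h : a ^ 2 ≤ b ^ 2) (_ : 0 ≤ a) : a ≤ b := by
  nlinarith

lemma norm_ev_isometry {V : Matrix (Fin n) (Fin p) ℝ} (hV : Vᵀ * V = 1) (x : Fin p → ℝ) :
    ‖ev (V *ᵥ x)‖ = ‖ev x‖ := by
  have h : ‖ev (V *ᵥ x)‖ ^ 2 = ‖ev x‖ ^ 2 := by
    rw [norm_ev_sq, norm_ev_sq, mulVec_dot, Matrix.mulVec_mulVec, hV, Matrix.one_mulVec]
  have := norm_nonneg (ev (V *ᵥ x)); have := norm_nonneg (ev x)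
  nlinarith

lemma norm_ev_diag_le {d : Fin n → ℝ} {c : ℝ} (hc : 0 ≤ c) (h : ∀ i, |d i| ≤ c)
    (x : Fin n → ℝ) : ‖ev (Matrix.diagonal d *ᵥ x)‖ ≤ c * ‖ev x‖ := by
  refine le_of_sq_le_sq (by positivity) ?_ (norm_nonneg _)
  rw [mul_pow, norm_ev_sq, norm_ev_sq]
  simp only [Matrix.mulVec_diagonal, dotProduct]
  rw [Finset.mul_sum]
  refine Finset.sum_le_sum fun i _ => ?_
  have := h i
  have : d i ^ 2 ≤ c ^ 2 := by nlinarith [abs_nonneg (d i), sq_abs (d i)]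
  nlinarith [sq_nonneg (x i)]

lemma norm_ev_diag_ge {d : Fin n → ℝ} {c : ℝ} (hc : 0 ≤ c) (h : ∀ i, c ≤ |d i|)
    (x : Fin n → ℝ) : c * ‖ev x‖ ≤ ‖ev (Matrix.diagonal d *ᵥ x)‖ := by
  refine le_of_sq_le_sq (norm_nonneg _) ?_ (by positivity)
  rw [mul_pow, norm_ev_sq, norm_ev_sq]
  simp only [Matrix.mulVec_diagonal, dotProduct]
  rw [Finset.mul_sum]
  refine Finset.sum_le_sum fun i _ => ?_
  have h1 := h i
  have : c ^ 2 ≤ d i ^ 2 := by nlinarith [abs_nonneg (d i), sq_abs (d i)]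
  nlinarith [sq_nonneg (x i)]

lemma specNorm_diagonal_le {d : Fin n → ℝ} {c : ℝ} (hc : 0 ≤ c) (h : ∀ i, |d i| ≤ c) :
    specNorm (Matrix.diagonal d) ≤ c := by
  refine ContinuousLinearMap.opNorm_le_bound _ hc ?_
  intro x
  exact norm_ev_diag_le hc h ((WithLp.equiv 2 (Fin n → ℝ)) x)

lemma norm_ev_single (i : Fin n) : ‖ev (Pi.single i (1 : ℝ))‖ = 1 := by
  have h : ‖ev (Pi.single i (1 : ℝ))‖ ^ 2 = 1 := by
    rw [norm_ev_sq, dotProduct]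
    simp [Pi.single_apply]
  nlinarith [norm_nonneg (ev (Pi.single i (1 : ℝ)))]

lemma norm_ev_diag_single {r : ℕ} {d : Fin r → ℝ} (i : Fin r) (hd : 0 ≤ d i) :
    ‖ev (Matrix.diagonal d *ᵥ Pi.single i (1 : ℝ))‖ = d i := by
  have h : ‖ev (Matrix.diagonal d *ᵥ Pi.single i (1 : ℝ))‖ ^ 2 = d i ^ 2 := by
    rw [norm_ev_sq, dotProduct]
    simp only [Matrix.mulVec_diagonal, Pi.single_apply]
    rw [Finset.sum_eq_single i]
    · simp [sq]
    · intro j _ hji; simp [hji]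
    · simp
  nlinarith [norm_nonneg (ev (Matrix.diagonal d *ᵥ Pi.single i (1 : ℝ)))]

lemma mp_unique {A : Matrix (Fin m) (Fin n) ℝ} {B B' : Matrix (Fin n) (Fin m) ℝ}
    (hB : IsMPInv A B) (hB' : IsMPInv A B') : B = B' := by
  obtain ⟨h1, h2, h3, h4⟩ := hB
  obtain ⟨h1', h2', h3', h4'⟩ := hB'
  have hab : A * B = A * B' := by
    calc A * B = (A * B' * A) * B := by rw [h1']
    _ = (A * B') * (A * B) := by rw [Matrix.mul_assoc]
    _ = (A * B')ᵀ * (A * B)ᵀ := by rw [h3, h3']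
    _ = ((A * B) * (A * B'))ᵀ := by simp only [Matrix.transpose_mul, Matrix.mul_assoc]
    _ = (A * (B * A) * B')ᵀ := by simp only [Matrix.mul_assoc]
    _ = ((A * B * A) * B')ᵀ := by simp only [Matrix.mul_assoc]
    _ = (A * B')ᵀ := by rw [h1]
    _ = A * B' := h3'
  have hba : B * A = B' * A := by
    calc B * A = B * (A * B' * A) := by rw [h1']
    _ = (B * A) * (B' * A) := by simp only [Matrix.mul_assoc]
    _ = (B * A)ᵀ * (B' * A)ᵀ := by rw [h4, h4']
    _ = ((B' * A) * (B * A))ᵀ := by simp only [Matrix.transpose_mul, Matrix.mul_assoc]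
    _ = (B' * (A * B * A))ᵀ := by simp only [Matrix.mul_assoc]
    _ = (B' * A)ᵀ := by rw [h1]
    _ = B' * A := h4'
  calc B = B * A * B := h2.symm
  _ = B * (A * B') := by rw [Matrix.mul_assoc, ← hab, ← Matrix.mul_assoc]
  _ = (B * A) * B' := by rw [Matrix.mul_assoc]
  _ = (B' * A) * B' := by rw [hba]
  _ = B' := h2'

lemma mp_of_inv {A B : Matrix (Fin n) (Fin n) ℝ} (h1 : A * B = 1) (h2 : B * A = 1) :
    IsMPInv A B := by
  refine ⟨?_, ?_, ?_, ?_⟩ <;> simp [h1, h2]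

lemma isUnit_of_rank_eq {A : Matrix (Fin n) (Fin n) ℝ} (h : A.rank = n) : IsUnit A := by
  rw [Matrix.isUnit_iff_isUnit_det, isUnit_iff_ne_zero]
  intro hdet
  obtain ⟨v, hv, hv0⟩ := (Matrix.exists_mulVec_eq_zero_iff).2 hdet
  have hker : v ∈ LinearMap.ker A.mulVecLin := by simpa [Matrix.mulVecLin] using hv0
  have hrn := A.mulVecLin.finrank_range_add_finrank_ker
  have hfr : Module.finrank ℝ (LinearMap.range A.mulVecLin) = n := h
  simp only [Module.finrank_fintype_fun_eq_card, Fintype.card_fin] at hrn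
  have : Module.finrank ℝ (LinearMap.ker A.mulVecLin) = 0 := by omega
  rw [Submodule.finrank_eq_zero] at this
  rw [this, Submodule.mem_bot] at hker
  exact hv hker

lemma submatrix_mul_right (A : Matrix (Fin m) (Fin n) ℝ) (B : Matrix (Fin n) (Fin p) ℝ)
    (g : Fin q → Fin p) : (A * B).submatrix id g = A * B.submatrix id g := by
  ext i j
  simp [Matrix.mul_apply]

set_option maxHeartbeats 2000000 in
lemma weyl {m n r : ℕ} (hr : 0 < r)
    (L : Matrix (Fin m) (Fin n) ℝ)
    (W : Matrix (Fin m) (Fin r) ℝ) (σ : Fin r → ℝ) (V : Matrix (Fin n) (Fin r) ℝ)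
    (hW : Wᵀ * W = 1) (hV : Vᵀ * V = 1)
    (hL : L = W * Matrix.diagonal σ * Vᵀ)
    (smin : ℝ) (hsminpos : 0 < smin) (hsmin : ∀ i, smin ≤ σ i)
    (E : Matrix (Fin m) (Fin n) ℝ) (hE : specNorm E ≤ smin / 2)
    (Wt : Matrix (Fin m) (Fin r) ℝ) (σt : Fin r → ℝ) (Vt : Matrix (Fin n) (Fin r) ℝ)
    (hWt : Wtᵀ * Wt = 1) (hVt : Vtᵀ * Vt = 1) (hσt : ∀ i, 0 < σt i)
    (F : Matrix (Fin m) (Fin n) ℝ)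
    (hLt : L + E = Wt * Matrix.diagonal σt * Vtᵀ + F)
    (hWF : Wtᵀ * F = 0) (hFV : F * Vt = 0)
    (hFsmall : ∀ i, specNorm F ≤ σt i) :
    ∀ i, smin / 2 ≤ σt i := by
  haveI : Nonempty (Fin r) := ⟨⟨0, hr⟩⟩
  obtain ⟨i₀, _, hi₀⟩ := Finset.exists_min_image Finset.univ σt ⟨⟨0, hr⟩, Finset.mem_univ _⟩
  suffices hmain : smin / 2 ≤ σt i₀ by
    intro i; exact le_trans hmain (hi₀ i (Finset.mem_univ i))
  -- subspaces
  set S : Submodule ℝ (EuclideanSpace ℝ (Fin n)) := LinearMap.range (Matrix.toEuclideanLin V) with hS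
  set K : Submodule ℝ (EuclideanSpace ℝ (Fin n)) := LinearMap.range (Matrix.toEuclideanLin Vt) with hK
  have hker : ∀ (V' : Matrix (Fin n) (Fin r) ℝ), V'ᵀ * V' = 1 →
      LinearMap.ker (Matrix.toEuclideanLin V') = ⊥ := by
    intro V' hV'
    rw [LinearMap.ker_eq_bot']
    intro x hx
    have h1 : ‖Matrix.toEuclideanLin V' x‖ = ‖x‖ :=
      norm_ev_isometry hV' ((WithLp.equiv 2 (Fin r → ℝ)) x)
    rw [hx, norm_zero] at h1
    exact norm_eq_zero.mp h1.symm
  have hfrk : ∀ (V' : Matrix (Fin n) (Fin r) ℝ), V'ᵀ * V' = 1 →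
      Module.finrank ℝ (LinearMap.range (Matrix.toEuclideanLin V')) = r := by
    intro V' hV'
    have := LinearMap.finrank_range_add_finrank_ker (Matrix.toEuclideanLin V')
    rw [hker V' hV', finrank_bot, add_zero, finrank_euclideanSpace_fin] at this
    exact this
  have hfS : Module.finrank ℝ S = r := hfrk V hV
  have hfK : Module.finrank ℝ K = r := hfrk Vt hVt
  have hrn : r ≤ n := by
    have := Submodule.finrank_le K
    rwa [hfK, finrank_euclideanSpace_fin] at this
  -- the unit vector v₀
  set e₀ : Fin r → ℝ := Pi.single i₀ (1 : ℝ) with he₀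
  set v₀ : EuclideanSpace ℝ (Fin n) := ev (Vt *ᵥ e₀) with hv₀def
  have hv₀norm : ‖v₀‖ = 1 := by
    rw [hv₀def, norm_ev_isometry hVt, norm_ev_single]
  have hv₀ne : v₀ ≠ 0 := by
    intro h; rw [h, norm_zero] at hv₀norm; norm_num at hv₀norm
  have hv₀K : v₀ ∈ K := ⟨ev e₀, toEuclideanLin_ev Vt e₀⟩
  set U : Submodule ℝ (EuclideanSpace ℝ (Fin n)) := (ℝ ∙ v₀) ⊔ Kᗮ with hU
  have hdisj : (ℝ ∙ v₀) ⊓ Kᗮ = ⊥ := by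
    rw [Submodule.eq_bot_iff]
    rintro x ⟨hx1, hx2⟩
    obtain ⟨a, rfl⟩ := Submodule.mem_span_singleton.mp hx1
    have h0 : ⟪v₀, a • v₀⟫ = 0 := (Submodule.mem_orthogonal K _).mp hx2 v₀ hv₀K
    rw [real_inner_smul_right, real_inner_self_eq_norm_sq, hv₀norm] at h0
    simp at h0
    simp [h0]
  have hfKO : r + Module.finrank ℝ Kᗮ = n := by
    have := Submodule.finrank_add_finrank_orthogonal K
    rwa [hfK, finrank_euclideanSpace_fin] at this
  have hfU : Module.finrank ℝ U = 1 + Module.finrank ℝ Kᗮ := by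
    have := Submodule.finrank_sup_add_finrank_inf_eq (ℝ ∙ v₀) Kᗮ
    rw [hdisj, finrank_bot, add_zero, finrank_span_singleton hv₀ne] at this
    exact this
  -- find nonzero vector in S ⊓ U
  have hSU : S ⊓ U ≠ ⊥ := by
    intro hbot
    have h1 := Submodule.finrank_sup_add_finrank_inf_eq S U
    rw [hbot, finrank_bot, add_zero, hfS, hfU] at h1
    have h2 : Module.finrank ℝ (S ⊔ U : Submodule ℝ (EuclideanSpace ℝ (Fin n))) ≤ n := by
      have := Submodule.finrank_le (S ⊔ U : Submodule ℝ (EuclideanSpace ℝ (Fin n)))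
      rwa [finrank_euclideanSpace_fin] at this
    omega
  rw [Submodule.ne_bot_iff] at hSU
  obtain ⟨v, hv, hvne⟩ := hSU
  rw [Submodule.mem_inf] at hv
  obtain ⟨hvS, hvU⟩ := hv
  have hvpos : 0 < ‖v‖ := norm_pos_iff.mpr hvne
  set vf : Fin n → ℝ := (WithLp.equiv 2 (Fin n → ℝ)) v with hvf
  have hvev : v = ev vf := rfl
  obtain ⟨x, hx⟩ := hvS
  set y : Fin r → ℝ := (WithLp.equiv 2 (Fin r → ℝ)) x with hy
  have hVy : V *ᵥ y = vf := by
    have : ev (V *ᵥ y) = ev vf := by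
      rw [← toEuclideanLin_ev]
      exact hx
    exact congrArg (WithLp.equiv 2 (Fin n → ℝ)) this
  have hnv : ‖ev y‖ = ‖v‖ := by
    rw [← norm_ev_isometry hV y, hVy, ← hvev]
  have hlow : smin / 2 * ‖v‖ ≤ ‖ev ((L + E) *ᵥ vf)‖ := by
    have hsplit : (L + E) *ᵥ vf = L *ᵥ vf + E *ᵥ vf := Matrix.add_mulVec _ _ _
    have hLv : L *ᵥ vf = W *ᵥ (Matrix.diagonal σ *ᵥ y) := by
      rw [← hVy, Matrix.mulVec_mulVec, hL, Matrix.mulVec_mulVec, Matrix.mul_assoc, hV,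
        Matrix.mul_one, ← Matrix.mulVec_mulVec]
    have hnL : smin * ‖v‖ ≤ ‖ev (L *ᵥ vf)‖ := by
      rw [hLv, norm_ev_isometry hW, ← hnv]
      refine norm_ev_diag_ge (le_of_lt hsminpos) (fun i => ?_) y
      rw [abs_of_pos (lt_of_lt_of_le hsminpos (hsmin i))]; exact hsmin i
    have hnE : ‖ev (E *ᵥ vf)‖ ≤ smin / 2 * ‖v‖ := by
      calc ‖ev (E *ᵥ vf)‖ ≤ specNorm E * ‖ev vf‖ := norm_ev_mulVec_le E vf
      _ ≤ smin / 2 * ‖v‖ := by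
          rw [← hvev]
          exact mul_le_mul_of_nonneg_right hE (norm_nonneg v)
    have htri : ‖ev (L *ᵥ vf)‖ ≤ ‖ev ((L + E) *ᵥ vf)‖ + ‖ev (E *ᵥ vf)‖ := by
      rw [hsplit, ev_add]
      exact norm_le_add_norm_add _ _
    linarith
  -- upper bound
  rw [hU, Submodule.mem_sup] at hvU
  obtain ⟨z, hz, w, hw, hzw⟩ := hvU
  obtain ⟨a, rfl⟩ := Submodule.mem_span_singleton.mp hz
  set wf : Fin n → ℝ := (WithLp.equiv 2 (Fin n → ℝ)) w with hwf
  have hwev : w = ev wf := rfl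
  have hVtw : Vtᵀ *ᵥ wf = 0 := by
    have hall : ∀ x' : Fin r → ℝ, x' ⬝ᵥ (Vtᵀ *ᵥ wf) = 0 := by
      intro x'
      have hin : ⟪ev (Vt *ᵥ x'), w⟫ = 0 := by
        refine (Submodule.mem_orthogonal K w).mp hw _ ⟨ev x', toEuclideanLin_ev Vt x'⟩
      rw [hwev, inner_ev, mulVec_dot] at hin
      exact hin
    have := hall (Vtᵀ *ᵥ wf)
    exact dotProduct_self_eq_zero.mp this
  have hvfeq : vf = a • (Vt *ᵥ e₀) + wf := by
    have : ev vf = ev (a • (Vt *ᵥ e₀) + wf) := by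
      rw [← hvev, ← hzw]; rfl
    exact congrArg (WithLp.equiv 2 (Fin n → ℝ)) this
  have hTv : (L + E) *ᵥ vf = a • ((Wt * Matrix.diagonal σt) *ᵥ e₀) + F *ᵥ wf := by
    rw [hvfeq, Matrix.mulVec_add, Matrix.mulVec_smul, hLt]
    have h1 : (Wt * Matrix.diagonal σt * Vtᵀ + F) *ᵥ (Vt *ᵥ e₀) =
        (Wt * Matrix.diagonal σt) *ᵥ e₀ := by
      rw [Matrix.add_mulVec, Matrix.mulVec_mulVec, Matrix.mulVec_mulVec, Matrix.mul_assoc, hVt,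
        Matrix.mul_one, hFV, Matrix.zero_mulVec, add_zero]
    have h2 : (Wt * Matrix.diagonal σt * Vtᵀ + F) *ᵥ wf = F *ᵥ wf := by
      rw [Matrix.add_mulVec, ← Matrix.mulVec_mulVec, hVtw, Matrix.mulVec_zero, zero_add]
    rw [h1, h2]
  have hperp : ⟪a • ev ((Wt * Matrix.diagonal σt) *ᵥ e₀), ev (F *ᵥ wf)⟫ = 0 := by
    rw [real_inner_smul_left, inner_ev, mulVec_dot]
    have : (Wt * Matrix.diagonal σt)ᵀ *ᵥ (F *ᵥ wf) = 0 := by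
      rw [Matrix.mulVec_mulVec, Matrix.transpose_mul, Matrix.mul_assoc, hWF, Matrix.mul_zero,
        Matrix.zero_mulVec]
    rw [this, dotProduct_zero, mul_zero]
  have hWtnorm : ‖ev ((Wt * Matrix.diagonal σt) *ᵥ e₀)‖ = σt i₀ := by
    rw [← Matrix.mulVec_mulVec, norm_ev_isometry hWt, norm_ev_diag_single i₀ (le_of_lt (hσt i₀))]
  have hperp2 : ⟪a • v₀, w⟫ = 0 := by
    rw [real_inner_smul_left]
    rw [(Submodule.mem_orthogonal K w).mp hw v₀ hv₀K, mul_zero]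
  have hnormv : ‖v‖ ^ 2 = a ^ 2 + ‖w‖ ^ 2 := by
    rw [← hzw, norm_add_sq_real, hperp2]
    rw [norm_smul, hv₀norm]
    simp [Real.norm_eq_abs, sq_abs]
  have hFw : ‖ev (F *ᵥ wf)‖ ≤ σt i₀ * ‖w‖ := by
    calc ‖ev (F *ᵥ wf)‖ ≤ specNorm F * ‖ev wf‖ := norm_ev_mulVec_le F wf
    _ ≤ σt i₀ * ‖w‖ := by
        rw [← hwev]
        exact mul_le_mul_of_nonneg_right (hFsmall i₀) (norm_nonneg w)
  have hup : ‖ev ((L + E) *ᵥ vf)‖ ≤ σt i₀ * ‖v‖ := by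
    refine le_of_sq_le_sq (mul_nonneg (le_of_lt (hσt i₀)) (norm_nonneg v)) ?_ (norm_nonneg _)
    have hes : ev ((L + E) *ᵥ vf) =
        a • ev ((Wt * Matrix.diagonal σt) *ᵥ e₀) + ev (F *ᵥ wf) := by
      rw [hTv, ev_add, ev_smul]
    rw [hes, norm_add_sq_real, hperp]
    rw [norm_smul, hWtnorm]
    have h1 : (‖a‖ * σt i₀) ^ 2 = σt i₀ ^ 2 * a ^ 2 := by
      rw [mul_pow, Real.norm_eq_abs, sq_abs]; ring
    rw [h1]
    have h2 : ‖ev (F *ᵥ wf)‖ ^ 2 ≤ σt i₀ ^ 2 * ‖w‖ ^ 2 := by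
      have := hFw
      nlinarith [norm_nonneg (ev (F *ᵥ wf)), norm_nonneg w, hσt i₀]
    have h3 : (σt i₀ * ‖v‖) ^ 2 = σt i₀ ^ 2 * (a ^ 2 + ‖w‖ ^ 2) := by
      rw [mul_pow, hnormv]
    rw [h3]
    nlinarith
  have := le_trans hlow hup
  have := mul_le_mul_of_nonneg_right (le_refl (1:ℝ)) (le_of_lt hvpos)
  nlinarith

end SpecAux

set_option maxHeartbeats 1000000 in
theorem stmt9 (m n r k : ℕ) (hr : 0 < r)
    (L : Matrix (Fin m) (Fin n) ℝ)
    (W : Matrix (Fin m) (Fin r) ℝ) (σ : Fin r → ℝ) (V : Matrix (Fin n) (Fin r) ℝ)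
    (hW : Wᵀ * W = 1) (hV : Vᵀ * V = 1) (hσ : ∀ i, 0 < σ i)
    (hL : L = W * Matrix.diagonal σ * Vᵀ)
    (hrank : L.rank = r)
    (smin smax : ℝ)
    (hsmin : ∀ i, smin ≤ σ i) (hsmin' : ∃ i, σ i = smin)
    (hsmax : ∀ i, σ i ≤ smax) (hsmax' : ∃ i, σ i = smax)
    (E : Matrix (Fin m) (Fin n) ℝ) (hE : specNorm E ≤ smin / 2)
    (Wt : Matrix (Fin m) (Fin r) ℝ) (σt : Fin r → ℝ) (Vt : Matrix (Fin n) (Fin r) ℝ)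
    (hWt : Wtᵀ * Wt = 1) (hVt : Vtᵀ * Vt = 1) (hσt : ∀ i, 0 < σt i)
    (F : Matrix (Fin m) (Fin n) ℝ)
    (hLt : L + E = Wt * Matrix.diagonal σt * Vtᵀ + F)
    (hWF : Wtᵀ * F = 0) (hFV : F * Vt = 0)
    (hFsmall : ∀ i, specNorm F ≤ σt i)
    (g : Fin k → Fin n) (hg : Function.Injective g) (hk : k = r)
    (C Ct : Matrix (Fin m) (Fin k) ℝ)
    (hC : C = L.submatrix id g)
    (hCt : Ct = Wt * Matrix.diagonal σt * (Vt.submatrix g id)ᵀ)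
    (hCCt : specNorm (C - Ct) ≤ (1 / 8) * Real.sqrt ((k : ℝ) / (r * n)) * smin)
    (hVtJd : ∀ Bd : Matrix (Fin r) (Fin k) ℝ, IsMPInv (Vt.submatrix g id) Bd →
      specNorm Bd ≤ Real.sqrt ((r : ℝ) * n / k))
    (hCrank : C.rank = r) (hCtrank : Ct.rank = r)
    (hStewart : ∀ (Cd Ctd : Matrix (Fin k) (Fin m) ℝ), IsMPInv C Cd → IsMPInv Ct Ctd →
      specNorm (Cd - Ctd) ≤ 2 * specNorm Cd * specNorm Ctd * specNorm (C - Ct)) :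
    ∀ VJd : Matrix (Fin r) (Fin k) ℝ, IsMPInv (V.submatrix g id) VJd →
      specNorm VJd ≤ 4 * (smax / smin) * Real.sqrt ((r : ℝ) * n / k) := by
  subst hk
  intro VJd hVJd
  have hminpos : 0 < smin := by obtain ⟨i, hi⟩ := hsmin'; exact hi ▸ hσ i
  have hmaxpos : 0 < smax := by obtain ⟨i, hi⟩ := hsmax'; exact hi ▸ hσ i
  have hkn : k ≤ n := by simpa using Fintype.card_le_of_injective g hg
  have hnpos : 0 < n := lt_of_lt_of_le hr hkn
  have hσt2 : ∀ i, smin / 2 ≤ σt i :=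
    SpecAux.weyl hr L W σ V hW hV hL smin hminpos hsmin E hE Wt σt Vt hWt hVt hσt F hLt
      hWF hFV hFsmall
  set VJ : Matrix (Fin k) (Fin k) ℝ := V.submatrix g id with hVJ
  set VtJ : Matrix (Fin k) (Fin k) ℝ := Vt.submatrix g id with hVtJ
  have hCfact : C = W * Matrix.diagonal σ * VJᵀ := by
    rw [hC, hL, SpecAux.submatrix_mul_right, ← Matrix.transpose_submatrix]
  have hCtfact : Ct = Wt * Matrix.diagonal σt * VtJᵀ := hCt
  have hUnit : ∀ (V' : Matrix (Fin n) (Fin k) ℝ) (C' : Matrix (Fin m) (Fin k) ℝ)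
      (W' : Matrix (Fin m) (Fin k) ℝ) (σ' : Fin k → ℝ),
      C' = W' * Matrix.diagonal σ' * (V'.submatrix g id)ᵀ → C'.rank = k →
      IsUnit (V'.submatrix g id).det := by
    intro V' C' W' σ' hfact hrk
    have h1 : C'.rank ≤ ((V'.submatrix g id)ᵀ).rank := by
      rw [hfact]; exact Matrix.rank_mul_le_right _ _
    have h2 : ((V'.submatrix g id)ᵀ).rank ≤ k := by
      simpa using Matrix.rank_le_card_width ((V'.submatrix g id)ᵀ)
    have h1' : k ≤ ((V'.submatrix g id)ᵀ).rank := by omega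
    have h3 : ((V'.submatrix g id)ᵀ).rank = k := le_antisymm h2 h1'
    have h4 : IsUnit ((V'.submatrix g id)ᵀ) := SpecAux.isUnit_of_rank_eq h3
    rw [Matrix.isUnit_iff_isUnit_det, Matrix.det_transpose] at h4
    exact h4
  have hdVJ : IsUnit VJ.det := hUnit V C W σ hCfact hCrank
  have hdVtJ : IsUnit VtJ.det := hUnit Vt Ct Wt σt hCtfact hCtrank
  set B : Matrix (Fin k) (Fin k) ℝ := VJ⁻¹ with hB
  set Bt : Matrix (Fin k) (Fin k) ℝ := VtJ⁻¹ with hBt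
  have hB1 : VJ * B = 1 := Matrix.mul_nonsing_inv VJ hdVJ
  have hB2 : B * VJ = 1 := Matrix.nonsing_inv_mul VJ hdVJ
  have hBt1 : VtJ * Bt = 1 := Matrix.mul_nonsing_inv VtJ hdVtJ
  have hBt2 : Bt * VtJ = 1 := Matrix.nonsing_inv_mul VtJ hdVtJ
  have hVJdB : VJd = B := SpecAux.mp_unique hVJd (SpecAux.mp_of_inv hB1 hB2)
  set Dσ : Matrix (Fin k) (Fin k) ℝ := Matrix.diagonal σ with hDσ
  set Dinv : Matrix (Fin k) (Fin k) ℝ := Matrix.diagonal (fun i => (σ i)⁻¹) with hDinv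
  set Dσt : Matrix (Fin k) (Fin k) ℝ := Matrix.diagonal σt with hDσt
  set Dtinv : Matrix (Fin k) (Fin k) ℝ := Matrix.diagonal (fun i => (σt i)⁻¹) with hDtinv
  have hdd : ∀ (d : Fin k → ℝ), (∀ i, 0 < d i) →
      Matrix.diagonal d * Matrix.diagonal (fun i => (d i)⁻¹) = 1 ∧
      Matrix.diagonal (fun i => (d i)⁻¹) * Matrix.diagonal d = 1 := by
    intro d hd
    constructor
    · rw [Matrix.diagonal_mul_diagonal]
      rw [show ((fun i => d i * (d i)⁻¹) : Fin k → ℝ) = fun _ => 1 from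
          funext fun i => mul_inv_cancel₀ (ne_of_gt (hd i))]
      exact Matrix.diagonal_one
    · rw [Matrix.diagonal_mul_diagonal]
      rw [show ((fun i => (d i)⁻¹ * d i) : Fin k → ℝ) = fun _ => 1 from
          funext fun i => inv_mul_cancel₀ (ne_of_gt (hd i))]
      exact Matrix.diagonal_one
  obtain ⟨hD1, hD2⟩ := hdd σ hσ
  obtain ⟨hDt1, hDt2⟩ := hdd σt hσt
  have cW : ∀ (p : ℕ) (X : Matrix (Fin k) (Fin p) ℝ), Wᵀ * (W * X) = X := fun p X => by
    rw [← Matrix.mul_assoc, hW, Matrix.one_mul]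
  have cD1 : ∀ (p : ℕ) (X : Matrix (Fin k) (Fin p) ℝ), Dσ * (Dinv * X) = X := fun p X => by
    rw [← Matrix.mul_assoc, hD1, Matrix.one_mul]
  have cD2 : ∀ (p : ℕ) (X : Matrix (Fin k) (Fin p) ℝ), Dinv * (Dσ * X) = X := fun p X => by
    rw [← Matrix.mul_assoc, hD2, Matrix.one_mul]
  have cDt1 : ∀ (p : ℕ) (X : Matrix (Fin k) (Fin p) ℝ), Dσt * (Dtinv * X) = X := fun p X => by
    rw [← Matrix.mul_assoc, hDt1, Matrix.one_mul]
  have cDt2 : ∀ (p : ℕ) (X : Matrix (Fin k) (Fin p) ℝ), Dtinv * (Dσt * X) = X := fun p X => by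
    rw [← Matrix.mul_assoc, hDt2, Matrix.one_mul]
  have hBT1 : VJᵀ * Bᵀ = 1 := by rw [← Matrix.transpose_mul, hB2, Matrix.transpose_one]
  have hBT2 : Bᵀ * VJᵀ = 1 := by rw [← Matrix.transpose_mul, hB1, Matrix.transpose_one]
  have hBtT1 : VtJᵀ * Btᵀ = 1 := by rw [← Matrix.transpose_mul, hBt2, Matrix.transpose_one]
  have hBtT2 : Btᵀ * VtJᵀ = 1 := by rw [← Matrix.transpose_mul, hBt1, Matrix.transpose_one]
  have cB : ∀ (p : ℕ) (X : Matrix (Fin k) (Fin p) ℝ), VJᵀ * (Bᵀ * X) = X := fun p X => by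
    rw [← Matrix.mul_assoc, hBT1, Matrix.one_mul]
  have cBt : ∀ (p : ℕ) (X : Matrix (Fin k) (Fin p) ℝ), VtJᵀ * (Btᵀ * X) = X := fun p X => by
    rw [← Matrix.mul_assoc, hBtT1, Matrix.one_mul]
  set Cd : Matrix (Fin k) (Fin m) ℝ := Bᵀ * Dinv * Wᵀ with hCd
  set Ctd : Matrix (Fin k) (Fin m) ℝ := Btᵀ * Dtinv * Wtᵀ with hCtd
  have hmp : ∀ (W' : Matrix (Fin m) (Fin k) ℝ) (D D' N Nt : Matrix (Fin k) (Fin k) ℝ),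
      W'ᵀ * W' = 1 →
      (∀ (p : ℕ) (X : Matrix (Fin k) (Fin p) ℝ), D * (D' * X) = X) →
      (∀ (p : ℕ) (X : Matrix (Fin k) (Fin p) ℝ), D' * (D * X) = X) →
      (∀ (p : ℕ) (X : Matrix (Fin k) (Fin p) ℝ), N * (Nt * X) = X) →
      Nt * N = 1 →
      IsMPInv (W' * D * N) (Nt * D' * W'ᵀ) := by
    intro W' D D' N Nt hW' cd1 cd2 cn hnt
    have cw : ∀ (p : ℕ) (X : Matrix (Fin k) (Fin p) ℝ), W'ᵀ * (W' * X) = X := fun p X => by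
      rw [← Matrix.mul_assoc, hW', Matrix.one_mul]
    have key1 : (W' * D * N) * (Nt * D' * W'ᵀ) = W' * W'ᵀ := by
      simp only [Matrix.mul_assoc]
      rw [cn, cd1]
    have key2 : (Nt * D' * W'ᵀ) * (W' * D * N) = 1 := by
      simp only [Matrix.mul_assoc]
      rw [cw, cd2, hnt]
    refine ⟨?_, ?_, ?_, ?_⟩
    · rw [key1]
      simp only [Matrix.mul_assoc]
      rw [cw]
    · rw [key2, Matrix.one_mul]
    · rw [key1, Matrix.transpose_mul, Matrix.transpose_transpose]
    · rw [key2, Matrix.transpose_one]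
  have mpC : IsMPInv C Cd := by
    rw [hCfact]
    exact hmp W Dσ Dinv VJᵀ Bᵀ hW cD1 cD2 cB hBT2
  have mpCt : IsMPInv Ct Ctd := by
    rw [hCtfact]
    exact hmp Wt Dσt Dtinv VtJᵀ Btᵀ hWt cDt1 cDt2 cBt hBtT2
  have st := hStewart Cd Ctd mpC mpCt
  -- norm bounds
  have nBt : specNorm Bt ≤ Real.sqrt ((k : ℝ) * n / k) :=
    hVtJd Bt (SpecAux.mp_of_inv hBt1 hBt2)
  have nDtinv : specNorm Dtinv ≤ 2 / smin := by
    rw [hDtinv]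
    refine SpecAux.specNorm_diagonal_le (by positivity) fun i => ?_
    rw [abs_of_pos (inv_pos.mpr (hσt i)), inv_eq_one_div, div_le_div_iff₀ (hσt i) hminpos]
    linarith [hσt2 i]
  have hDtinvT : Dtinvᵀ = Dtinv := by rw [hDtinv]; exact Matrix.diagonal_transpose _
  have hDσT : Dσᵀ = Dσ := by rw [hDσ]; exact Matrix.diagonal_transpose _
  have nCtd : specNorm Ctd ≤ Real.sqrt ((k : ℝ) * n / k) * (2 / smin) := by
    have h1 : Ctd = Btᵀ * (Dtinv * Wtᵀ) := by rw [hCtd, Matrix.mul_assoc]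
    have h2 : specNorm (Dtinv * Wtᵀ) = specNorm Dtinv := by
      have he : Dtinv * Wtᵀ = (Wt * Dtinv)ᵀ := by
        rw [Matrix.transpose_mul, hDtinvT]
      rw [he, SpecAux.specNorm_transpose, SpecAux.specNorm_orth_mul hr hWt]
    calc specNorm Ctd ≤ specNorm Btᵀ * specNorm (Dtinv * Wtᵀ) := by
          rw [h1]; exact SpecAux.specNorm_mul_le _ _
    _ = specNorm Bt * specNorm Dtinv := by rw [SpecAux.specNorm_transpose, h2]
    _ ≤ Real.sqrt ((k : ℝ) * n / k) * (2 / smin) := by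
        refine mul_le_mul nBt nDtinv (SpecAux.specNorm_nonneg _) (Real.sqrt_nonneg _)
  have hk0 : (k : ℝ) ≠ 0 := Nat.cast_ne_zero.mpr hr.ne'
  have hn0 : (n : ℝ) ≠ 0 := Nat.cast_ne_zero.mpr hnpos.ne'
  have hPQ : Real.sqrt ((k : ℝ) * n / k) * Real.sqrt ((k : ℝ) / ((k : ℝ) * n)) = 1 := by
    rw [← Real.sqrt_mul (by positivity)]
    rw [show (k : ℝ) * n / k * ((k : ℝ) / ((k : ℝ) * n)) = 1 from by field_simp]
    exact Real.sqrt_one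
  have hαβ : (Real.sqrt ((k : ℝ) * n / k) * (2 / smin)) *
      (1 / 8 * Real.sqrt ((k : ℝ) / ((k : ℝ) * n)) * smin) = 1 / 4 := by
    have h14 : (2 / smin) * (1 / 8 * smin) = 1 / 4 := by
      field_simp
      ring
    calc (Real.sqrt ((k : ℝ) * n / k) * (2 / smin)) *
        (1 / 8 * Real.sqrt ((k : ℝ) / ((k : ℝ) * n)) * smin)
        = (Real.sqrt ((k : ℝ) * n / k) * Real.sqrt ((k : ℝ) / ((k : ℝ) * n))) *
          ((2 / smin) * (1 / 8 * smin)) := by ring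
    _ = 1 / 4 := by rw [hPQ, h14, one_mul]
  have hCCt' : specNorm (C - Ct) ≤ 1 / 8 * Real.sqrt ((k : ℝ) / ((k : ℝ) * n)) * smin := by
    convert hCCt using 3
  have hsmall : 2 * specNorm Ctd * specNorm (C - Ct) ≤ 1 / 2 := by
    have hxy : specNorm Ctd * specNorm (C - Ct) ≤
        (Real.sqrt ((k : ℝ) * n / k) * (2 / smin)) *
        (1 / 8 * Real.sqrt ((k : ℝ) / ((k : ℝ) * n)) * smin) := by
      refine mul_le_mul nCtd hCCt' (SpecAux.specNorm_nonneg _) (by positivity)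
    rw [hαβ] at hxy
    linarith
  have tri : specNorm Cd ≤ specNorm Ctd + specNorm (Cd - Ctd) :=
    SpecAux.specNorm_le_add_sub Cd Ctd
  have hCdle : specNorm Cd ≤ 2 * (Real.sqrt ((k : ℝ) * n / k) * (2 / smin)) := by
    have h3 : 2 * specNorm Cd * specNorm Ctd * specNorm (C - Ct)
        = specNorm Cd * (2 * specNorm Ctd * specNorm (C - Ct)) := by ring
    have h4 : specNorm Cd * (2 * specNorm Ctd * specNorm (C - Ct)) ≤ specNorm Cd * (1 / 2) :=
      mul_le_mul_of_nonneg_left hsmall (SpecAux.specNorm_nonneg Cd)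
    have h5 : specNorm Cd ≤ 2 * specNorm Ctd := by
      rw [h3] at st
      linarith
    linarith [nCtd]
  have hBTeq : Bᵀ = Cd * (W * Dσ) := by
    rw [hCd]
    simp only [Matrix.mul_assoc]
    rw [cW, hD2, Matrix.mul_one]
  have nDσ : specNorm Dσ ≤ smax := by
    rw [hDσ]
    refine SpecAux.specNorm_diagonal_le (le_of_lt hmaxpos) fun i => ?_
    rw [abs_of_pos (hσ i)]; exact hsmax i
  calc specNorm VJd = specNorm Bᵀ := by rw [hVJdB, SpecAux.specNorm_transpose]
  _ = specNorm (Cd * (W * Dσ)) := by rw [hBTeq]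
  _ ≤ specNorm Cd * specNorm (W * Dσ) := SpecAux.specNorm_mul_le _ _
  _ = specNorm Cd * specNorm Dσ := by rw [SpecAux.specNorm_orth_mul hr hW]
  _ ≤ specNorm Cd * smax := mul_le_mul_of_nonneg_left nDσ (SpecAux.specNorm_nonneg _)
  _ ≤ (2 * (Real.sqrt ((k : ℝ) * n / k) * (2 / smin))) * smax :=
      mul_le_mul_of_nonneg_right hCdle (le_of_lt hmaxpos)
  _ = 4 * (smax / smin) * Real.sqrt ((k : ℝ) * n / k) := by
      field_simp
      ring
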